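/- Let λ > 0 and R > 0, let Π = N(0, λ²) be the centered Gaussian probability measure on ℝ with variance λ², and for u ∈ ℝ denote the clipping T_R u = max(−R, min(R, u)). Then for every a ∈ ℝ with |a| ≤ R, | ∫_ℝ (a − μ)² dΠ(μ) − ∫_ℝ (a − T_R μ)² dΠ(μ) | ≤ 16·λ²·exp(−R²/(4λ²)). -/

import Mathlib

open MeasureTheory ProbabilityTheory Real
open scoped NNReal ENNReal

lemma integrable_sq_mul_exp_neg_mul_sq {b : ℝ} (hb : 0 < b) :
    Integrable fun x : ℝ => x ^ 2 * Real.exp (-b * x ^ 2) := by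
  have h := integrable_rpow_mul_exp_neg_mul_sq hb (by norm_num : (-1:ℝ) < 2)
  have h2 : ∀ x : ℝ, x ^ (2:ℝ) = x ^ 2 := fun x => by
    rw [show (2:ℝ) = ((2:ℕ):ℝ) by norm_num, Real.rpow_natCast]
  simpa only [h2] using h

lemma integral_sq_mul_exp_neg_mul_sq {b : ℝ} (hb : 0 < b) :
    ∫ x : ℝ, x ^ 2 * Real.exp (-b * x ^ 2) = Real.sqrt (π / b) / (2 * b) := by
  have hderiv : ∀ x : ℝ, HasDerivAt (fun x : ℝ => x * Real.exp (-b * x ^ 2))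
      (Real.exp (-b * x ^ 2) + (-2*b) * (x ^ 2 * Real.exp (-b * x ^ 2))) x := by
    intro x
    have h1 : HasDerivAt (fun x : ℝ => -b * x ^ 2) (-b * (2 * x)) x := by
      simpa using (hasDerivAt_pow 2 x).const_mul (-b)
    have h2 := h1.exp
    have h3 := (hasDerivAt_id x).mul h2
    refine h3.congr_deriv ?_
    simp
    ring
  have hint : Integrable (fun x : ℝ =>
      Real.exp (-b * x ^ 2) + (-2*b) * (x ^ 2 * Real.exp (-b * x ^ 2))) :=
    (integrable_exp_neg_mul_sq hb).add ((integrable_sq_mul_exp_neg_mul_sq hb).const_mul _)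
  have h0 := integral_eq_zero_of_hasDerivAt_of_integrable hderiv hint
    (integrable_mul_exp_neg_mul_sq hb)
  rw [integral_add (integrable_exp_neg_mul_sq hb)
      ((integrable_sq_mul_exp_neg_mul_sq hb).const_mul _), integral_const_mul,
      integral_gaussian] at h0
  have hb' : (2*b) ≠ 0 := by positivity
  rw [eq_div_iff hb']
  linear_combination -h0

lemma integral_gaussianReal_eq {v : ℝ≥0} (hv : v ≠ 0) (g : ℝ → ℝ) :
    ∫ x, g x ∂(gaussianReal 0 v) = ∫ x, gaussianPDFReal 0 v x * g x := by
  rw [gaussianReal_of_var_ne_zero _ hv, gaussianPDF_def]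
  have h : (fun x => ENNReal.ofReal (gaussianPDFReal 0 v x))
      = fun x => ((Real.toNNReal (gaussianPDFReal 0 v x) : ℝ≥0) : ℝ≥0∞) := rfl
  rw [h, integral_withDensity_eq_integral_smul
    ((measurable_gaussianPDFReal 0 v).real_toNNReal)]
  congr 1
  ext x
  rw [NNReal.smul_def, smul_eq_mul, Real.coe_toNNReal _ (gaussianPDFReal_nonneg 0 v x)]


/-- Clipping-comparison lemma: for the Gaussian measure `Π = N(0, λ²)` on `ℝ`, `R > 0`,
and any `a` with `|a| ≤ R`, denoting `T_R u = max(−R, min(R, u))`,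
`|∫ (a − μ)² dΠ(μ) − ∫ (a − T_R μ)² dΠ(μ)| ≤ 16·λ²·exp(−R²/(4λ²))`. -/
theorem gaussian_clipping_comparison (lam R : ℝ) (hlam : 0 < lam) (hR : 0 < R)
    (a : ℝ) (ha : |a| ≤ R) :
    |(∫ x, (a - x) ^ 2 ∂(gaussianReal 0 ⟨lam ^ 2, sq_nonneg lam⟩)) -
        ∫ x, (a - max (-R) (min R x)) ^ 2 ∂(gaussianReal 0 ⟨lam ^ 2, sq_nonneg lam⟩)| ≤
      16 * lam ^ 2 * Real.exp (-R ^ 2 / (4 * lam ^ 2)) := by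
  have hv : (⟨lam ^ 2, sq_nonneg lam⟩ : ℝ≥0) ≠ 0 := by
    simp only [Ne, ← NNReal.coe_eq_zero, NNReal.coe_mk]
    exact ne_of_gt (by positivity : (0:ℝ) < lam ^ 2)
  set v : ℝ≥0 := ⟨lam ^ 2, sq_nonneg lam⟩ with hv_def
  set D : ℝ := (Real.sqrt (2 * π * lam ^ 2))⁻¹ with hD_def
  have hD0 : 0 ≤ D := by positivity
  have hc : (0:ℝ) < (2 * lam ^ 2)⁻¹ := by positivity
  have hb : (0:ℝ) < (4 * lam ^ 2)⁻¹ := by positivity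
  have hwx : ∀ x, gaussianPDFReal 0 v x = D * Real.exp (-(2 * lam ^ 2)⁻¹ * x ^ 2) := by
    intro x
    rw [gaussianPDFReal]
    have hcoe : ((v : ℝ≥0) : ℝ) = lam ^ 2 := rfl
    rw [hcoe, sub_zero]
    congr 1
    field_simp
  have hwnn : ∀ x, 0 ≤ gaussianPDFReal 0 v x := gaussianPDFReal_nonneg 0 v
  -- integrability of the two integrands
  have hint1 : Integrable (fun x : ℝ => gaussianPDFReal 0 v x * (a - x) ^ 2) := by
    have h := ((integrable_exp_neg_mul_sq hc).const_mul (D * a ^ 2)).add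
      (((integrable_mul_exp_neg_mul_sq hc).const_mul (D * (-2 * a))).add
        ((integrable_sq_mul_exp_neg_mul_sq hc).const_mul D))
    refine h.congr (Filter.Eventually.of_forall fun x => ?_)
    simp only [Pi.add_apply]
    rw [hwx x]; ring
  have hint2 : Integrable (fun x : ℝ =>
      gaussianPDFReal 0 v x * (a - max (-R) (min R x)) ^ 2) := by
    refine Integrable.mono' ((integrable_gaussianPDFReal 0 v).const_mul (4 * R ^ 2))
      ?_ (Filter.Eventually.of_forall fun x => ?_)
    · exact ((measurable_gaussianPDFReal 0 v).mul
        ((by fun_prop : Continuous fun x : ℝ => (a - max (-R) (min R x)) ^ 2)).measurable).aestronglyMeasurable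
    · rw [Real.norm_eq_abs, abs_of_nonneg (mul_nonneg (hwnn x) (sq_nonneg _))]
      have hT1 : -R ≤ max (-R) (min R x) := le_max_left _ _
      have hT2 : max (-R) (min R x) ≤ R := max_le (by linarith) (min_le_left _ _)
      have ha' := abs_le.mp ha
      have hsq : (a - max (-R) (min R x)) ^ 2 ≤ 4 * R ^ 2 := by nlinarith
      have := mul_le_mul_of_nonneg_left hsq (hwnn x)
      linarith
  -- pass to Lebesgue integrals
  rw [integral_gaussianReal_eq hv, integral_gaussianReal_eq hv, ← integral_sub hint1 hint2]
  -- the dominating function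
  set G : ℝ → ℝ := fun x => 3 * D * Real.exp (-R ^ 2 / (4 * lam ^ 2)) *
    (x ^ 2 * Real.exp (-(4 * lam ^ 2)⁻¹ * x ^ 2)) with hG_def
  have hG_int : Integrable G := (integrable_sq_mul_exp_neg_mul_sq hb).const_mul _
  have hpt : ∀ x : ℝ, |gaussianPDFReal 0 v x * (a - x) ^ 2 -
      gaussianPDFReal 0 v x * (a - max (-R) (min R x)) ^ 2| ≤ G x := by
    intro x
    rw [← mul_sub, abs_mul, abs_of_nonneg (hwnn x)]
    rcases le_or_gt |x| R with h | h
    · have hx := abs_le.mp h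
      rw [min_eq_right hx.2, max_eq_right hx.1, sub_self, abs_zero, mul_zero]
      have : 0 ≤ G x := by rw [hG_def]; positivity
      exact this
    · have hx2 : R ^ 2 ≤ x ^ 2 := by nlinarith [sq_abs x, abs_nonneg x]
      have hf3 : |(a - x) ^ 2 - (a - max (-R) (min R x)) ^ 2| ≤ 3 * x ^ 2 := by
        have ha' := abs_le.mp ha
        rcases lt_abs.mp h with hxx | hxx
        · rw [min_eq_left hxx.le, max_eq_right (by linarith : -R ≤ R), abs_le]
          constructor <;> nlinarith
        · rw [min_eq_right (by linarith : x ≤ R), max_eq_left (by linarith : x ≤ -R), abs_le]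
          constructor <;> nlinarith
      calc gaussianPDFReal 0 v x * |(a - x) ^ 2 - (a - max (-R) (min R x)) ^ 2|
          ≤ gaussianPDFReal 0 v x * (3 * x ^ 2) :=
            mul_le_mul_of_nonneg_left hf3 (hwnn x)
        _ = 3 * D * (x ^ 2 * Real.exp (-(2 * lam ^ 2)⁻¹ * x ^ 2)) := by rw [hwx x]; ring
        _ ≤ G x := by
            rw [hG_def]
            have hexp : Real.exp (-(2 * lam ^ 2)⁻¹ * x ^ 2) ≤
                Real.exp (-R ^ 2 / (4 * lam ^ 2)) * Real.exp (-(4 * lam ^ 2)⁻¹ * x ^ 2) := by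
              rw [← Real.exp_add]
              apply Real.exp_le_exp.mpr
              have hkey : -(2 * lam ^ 2)⁻¹ * x ^ 2 -
                  (-R ^ 2 / (4 * lam ^ 2) + -(4 * lam ^ 2)⁻¹ * x ^ 2)
                  = (R ^ 2 - x ^ 2) / (4 * lam ^ 2) := by field_simp; ring
              have hle : (R ^ 2 - x ^ 2) / (4 * lam ^ 2) ≤ 0 :=
                div_nonpos_of_nonpos_of_nonneg (by linarith) (by positivity)
              linarith
            calc 3 * D * (x ^ 2 * Real.exp (-(2 * lam ^ 2)⁻¹ * x ^ 2))
                ≤ 3 * D * (x ^ 2 * (Real.exp (-R ^ 2 / (4 * lam ^ 2)) *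
                    Real.exp (-(4 * lam ^ 2)⁻¹ * x ^ 2))) := by
                  apply mul_le_mul_of_nonneg_left _ (by positivity)
                  exact mul_le_mul_of_nonneg_left hexp (sq_nonneg x)
              _ = 3 * D * Real.exp (-R ^ 2 / (4 * lam ^ 2)) *
                    (x ^ 2 * Real.exp (-(4 * lam ^ 2)⁻¹ * x ^ 2)) := by ring
  calc |∫ x, (gaussianPDFReal 0 v x * (a - x) ^ 2 -
        gaussianPDFReal 0 v x * (a - max (-R) (min R x)) ^ 2)|
      ≤ ∫ x, |gaussianPDFReal 0 v x * (a - x) ^ 2 -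
          gaussianPDFReal 0 v x * (a - max (-R) (min R x)) ^ 2| :=
      by simpa [Real.norm_eq_abs] using
        MeasureTheory.norm_integral_le_integral_norm (μ := (volume : Measure ℝ))
          (fun x => gaussianPDFReal 0 v x * (a - x) ^ 2 -
            gaussianPDFReal 0 v x * (a - max (-R) (min R x)) ^ 2)
    _ ≤ ∫ x, G x := integral_mono (hint1.sub hint2).abs hG_int hpt
    _ = 3 * D * Real.exp (-R ^ 2 / (4 * lam ^ 2)) *
        (Real.sqrt (π / (4 * lam ^ 2)⁻¹) / (2 * (4 * lam ^ 2)⁻¹)) := by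
        rw [hG_def]
        rw [integral_const_mul, integral_sq_mul_exp_neg_mul_sq hb]
    _ ≤ 16 * lam ^ 2 * Real.exp (-R ^ 2 / (4 * lam ^ 2)) := by
        have hpib : π / (4 * lam ^ 2)⁻¹ = 4 * π * lam ^ 2 := by field_simp
        have hdiv : Real.sqrt (π / (4 * lam ^ 2)⁻¹) / (2 * (4 * lam ^ 2)⁻¹)
            = Real.sqrt (4 * π * lam ^ 2) * (2 * lam ^ 2) := by
          rw [hpib]; field_simp; ring
        rw [hdiv]
        have h1 : Real.sqrt (4 * π * lam ^ 2) ≤ 4 * lam := by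
          rw [show (4 * lam : ℝ) = Real.sqrt ((4 * lam) ^ 2) from
            (Real.sqrt_sq (by positivity)).symm]
          apply Real.sqrt_le_sqrt
          nlinarith [Real.pi_le_four]
        have h2 : D ≤ (2 * lam)⁻¹ := by
          rw [hD_def]
          apply inv_anti₀ (by positivity)
          rw [show (2 * lam : ℝ) = Real.sqrt ((2 * lam) ^ 2) from
            (Real.sqrt_sq (by positivity)).symm]
          apply Real.sqrt_le_sqrt
          nlinarith [Real.pi_gt_three]
        have hE : 0 < Real.exp (-R ^ 2 / (4 * lam ^ 2)) := Real.exp_pos _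
        calc 3 * D * Real.exp (-R ^ 2 / (4 * lam ^ 2)) * (Real.sqrt (4 * π * lam ^ 2) * (2 * lam ^ 2))
            ≤ 3 * (2 * lam)⁻¹ * Real.exp (-R ^ 2 / (4 * lam ^ 2)) * (4 * lam * (2 * lam ^ 2)) := by
              have hs0 : 0 ≤ Real.sqrt (4 * π * lam ^ 2) := Real.sqrt_nonneg _
              gcongr
          _ = 12 * lam ^ 2 * Real.exp (-R ^ 2 / (4 * lam ^ 2)) := by field_simp; ring
          _ ≤ 16 * lam ^ 2 * Real.exp (-R ^ 2 / (4 * lam ^ 2)) := by nlinarith
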